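/- Let μ ∈ ℝ and 0 < ρ < 1, set γ = √(1−ρ²), let ν(x) = e^{−x²/2}/√(2π), and define the functions Q_N : ℝ → ℝ recursively by Q_0 ≡ 1 and Q_{N+1}(x) = (μ+x) ∫_ℝ Q_N(ρx + γy) ν(y) dy. Define T_N : ℝ → ℝ by T_N(t) := e^{−t²/2} ∫_ℝ Q_N(x) e^{tx} ν(x) dx. Then each T_N is differentiable and satisfies the recurrence T_{N+1}(t) = (μ+t)·T_N(ρt) + ρ·T_N'(ρt) for all t ∈ ℝ and all N ≥ 0. -/

import Mathlib

open MeasureTheory ProbabilityTheory Polynomial Real Filter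
open scoped NNReal ENNReal

noncomputable def gm (n : ℕ) : ℝ := ∫ x, x ^ n ∂(gaussianReal 0 1)

lemma gpdf_eq (x : ℝ) : gaussianPDFReal 0 1 x = (Real.sqrt (2 * π))⁻¹ * Real.exp (-x ^ 2 / 2) := by
  simp [gaussianPDFReal]

lemma integral_nu (f : ℝ → ℝ) :
    ∫ x, f x ∂(gaussianReal 0 1) = ∫ x, gaussianPDFReal 0 1 x * f x := by
  rw [gaussianReal_of_var_ne_zero 0 one_ne_zero]
  have h : gaussianPDF 0 1 = fun x => ((Real.toNNReal (gaussianPDFReal 0 1 x) : ℝ≥0) : ℝ≥0∞) := rfl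
  rw [h, integral_withDensity_eq_integral_smul
    ((measurable_gaussianPDFReal 0 1).real_toNNReal) f]
  congr 1
  ext x
  simp [NNReal.smul_def, Real.coe_toNNReal _ (gaussianPDFReal_nonneg 0 1 x)]

lemma integrable_nu_iff (f : ℝ → ℝ) :
    Integrable f (gaussianReal 0 1) ↔
      Integrable (fun x => f x * gaussianPDFReal 0 1 x) := by
  rw [gaussianReal_of_var_ne_zero 0 one_ne_zero,
    integrable_withDensity_iff (measurable_gaussianPDF 0 1) (by simp [gaussianPDF])]
  constructor <;> intro h <;> refine h.congr (Filter.Eventually.of_forall fun x => ?_)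
  · simp [gaussianPDF, ENNReal.toReal_ofReal (gaussianPDFReal_nonneg 0 1 x)]
  · simp [gaussianPDF, ENNReal.toReal_ofReal (gaussianPDFReal_nonneg 0 1 x)]

lemma integrable_pow_gauss (n : ℕ) :
    Integrable (fun x : ℝ => x ^ n * Real.exp (-x ^ 2 / 2)) := by
  have h := integrable_rpow_mul_exp_neg_mul_sq (b := (1:ℝ)/2) (by norm_num)
    (s := (n : ℝ)) (by exact lt_of_lt_of_le (by norm_num) (Nat.cast_nonneg n))
  refine h.congr (Filter.Eventually.of_forall fun x => ?_)
  simp only [Real.rpow_natCast]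
  ring_nf

lemma integrable_pow_nu (n : ℕ) :
    Integrable (fun x : ℝ => x ^ n) (gaussianReal 0 1) := by
  rw [integrable_nu_iff]
  refine ((integrable_pow_gauss n).const_mul ((Real.sqrt (2 * π))⁻¹)).congr
    (Filter.Eventually.of_forall fun x => ?_)
  simp only [gpdf_eq]; ring

lemma integrable_polyeval (p : ℝ[X]) :
    Integrable (fun x : ℝ => p.eval x) (gaussianReal 0 1) := by
  have h : ∀ x : ℝ, p.eval x = ∑ i ∈ Finset.range (p.natDegree + 1), p.coeff i * x ^ i :=
    fun x => p.eval_eq_sum_range x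
  simp_rw [h]
  exact MeasureTheory.integrable_finset_sum _ fun i _ => (integrable_pow_nu i).const_mul _

lemma integral_polyeval (p : ℝ[X]) :
    ∫ x, p.eval x ∂(gaussianReal 0 1)
      = ∑ i ∈ Finset.range (p.natDegree + 1), p.coeff i * gm i := by
  have h : ∀ x : ℝ, p.eval x = ∑ i ∈ Finset.range (p.natDegree + 1), p.coeff i * x ^ i :=
    fun x => p.eval_eq_sum_range x
  simp_rw [h]
  rw [integral_finset_sum _ fun i _ => (integrable_pow_nu i).const_mul _]
  exact Finset.sum_congr rfl fun i _ => by rw [MeasureTheory.integral_const_mul]; rfl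

lemma gm_rec (n : ℕ) : gm (n + 1) = n * gm (n - 1) := by
  have hu : ∀ x : ℝ, HasDerivAt (fun y : ℝ => y ^ n) ((n : ℝ) * x ^ (n - 1)) x :=
    fun x => hasDerivAt_pow n x
  have hv : ∀ x : ℝ, HasDerivAt (fun y : ℝ => -Real.exp (-y ^ 2 / 2))
      (x * Real.exp (-x ^ 2 / 2)) x := by
    intro x
    have h1 : HasDerivAt (fun y : ℝ => -y ^ 2 / 2) (-x) x := by
      have := ((hasDerivAt_pow 2 x).neg).div_const 2
      exact this.congr_deriv (by norm_num; ring)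
    have := (h1.exp).neg
    exact this.congr_deriv (by ring)
  have hIuv' : Integrable ((fun x : ℝ => x ^ n) * fun x => x * Real.exp (-x ^ 2 / 2)) := by
    refine (integrable_pow_gauss (n + 1)).congr (Filter.Eventually.of_forall fun x => ?_)
    simp [Pi.mul_apply]; try ring
  have hIu'v : Integrable ((fun x : ℝ => (n : ℝ) * x ^ (n - 1)) * fun x =>
      -Real.exp (-x ^ 2 / 2)) := by
    refine (((integrable_pow_gauss (n - 1)).const_mul (n : ℝ)).neg).congr
      (Filter.Eventually.of_forall fun x => ?_)
    simp [Pi.mul_apply]; try ring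
  have hIuv : Integrable ((fun x : ℝ => x ^ n) * fun x => -Real.exp (-x ^ 2 / 2)) := by
    refine ((integrable_pow_gauss n).neg).congr (Filter.Eventually.of_forall fun x => ?_)
    simp [Pi.mul_apply]; try ring
  have key := MeasureTheory.integral_mul_deriv_eq_deriv_mul_of_integrable (fun x _ => hu x) (fun x _ => hv x) hIuv' hIu'v hIuv
  -- key : ∫ x, x ^ n * (x * exp (-x^2/2)) = -∫ x, (n * x^(n-1)) * (-exp (-x^2/2))
  have h1 : ∫ x : ℝ, x ^ (n + 1) * Real.exp (-x ^ 2 / 2)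
      = (n : ℝ) * ∫ x : ℝ, x ^ (n - 1) * Real.exp (-x ^ 2 / 2) := by
    rw [← MeasureTheory.integral_const_mul]
    rw [show (∫ x : ℝ, x ^ (n + 1) * Real.exp (-x ^ 2 / 2))
        = ∫ x : ℝ, x ^ n * (x * Real.exp (-x ^ 2 / 2)) from by
      congr 1; ext x; ring]
    rw [key, ← integral_neg]
    congr 1; ext x; ring
  have hnu : ∀ k : ℕ, gm k = (Real.sqrt (2 * π))⁻¹ * ∫ x : ℝ, x ^ k * Real.exp (-x ^ 2 / 2) := by
    intro k
    rw [gm, integral_nu, ← MeasureTheory.integral_const_mul]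
    congr 1; ext x; simp only [gpdf_eq]; ring
  rw [hnu, hnu, h1]
  ring

lemma gm_zero : gm 0 = 1 := by
  simp [gm]

lemma gm_even (k : ℕ) : gm (2 * k) = (Nat.factorial (2 * k) : ℝ) / (2 ^ k * (Nat.factorial k : ℝ)) := by
  induction k with
  | zero => simpa using gm_zero
  | succ k ih =>
    have h : 2 * (k + 1) = (2 * k + 1) + 1 := by ring
    rw [h, gm_rec]
    simp only [Nat.add_sub_cancel, ih]
    have h2 : Nat.factorial (2 * k + 1 + 1)
        = (2 * k + 1 + 1) * ((2 * k + 1) * Nat.factorial (2 * k)) := by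
      rw [Nat.factorial_succ, Nat.factorial_succ]
    rw [h2]
    rw [Nat.factorial_succ k]
    have hk : (Nat.factorial k : ℝ) ≠ 0 := Nat.cast_ne_zero.mpr (Nat.factorial_ne_zero k)
    push_cast
    field_simp
    ring

lemma gm_odd (k : ℕ) : gm (2 * k + 1) = 0 := by
  induction k with
  | zero =>
    have := gm_rec 0
    simpa using this
  | succ k ih =>
    have h : 2 * (k + 1) + 1 = (2 * k + 2) + 1 := by ring
    rw [h, gm_rec, show 2 * k + 2 - 1 = 2 * k + 1 from rfl, ih]
    ring

lemma gm_odd' {n : ℕ} (hn : Odd n) : gm n = 0 := by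
  obtain ⟨k, rfl⟩ := hn
  exact gm_odd k

lemma coef_id (s b : ℕ) (hb : b ≤ s) :
    (Nat.choose (2 * s) (2 * b) : ℝ)
        * ((Nat.factorial (2 * b) : ℝ) / (2 ^ b * (Nat.factorial b : ℝ))
          * ((Nat.factorial (2 * (s - b)) : ℝ)
            / (2 ^ (s - b) * (Nat.factorial (s - b) : ℝ))))
      = (Nat.factorial (2 * s) : ℝ) / (2 ^ s * (Nat.factorial s : ℝ))
          * (Nat.choose s b : ℝ) := by
  have e1 : 2 * s - 2 * b = 2 * (s - b) := by omega
  have f1 := Nat.choose_mul_factorial_mul_factorial (show 2 * b ≤ 2 * s by omega)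
  rw [e1] at f1
  have f2 := Nat.choose_mul_factorial_mul_factorial hb
  have f1' : (Nat.choose (2 * s) (2 * b) : ℝ) * (Nat.factorial (2 * b) : ℝ)
      * (Nat.factorial (2 * (s - b)) : ℝ) = (Nat.factorial (2 * s) : ℝ) := by
    exact_mod_cast congrArg (Nat.cast : ℕ → ℝ) f1
  have f2' : (Nat.choose s b : ℝ) * (Nat.factorial b : ℝ) * (Nat.factorial (s - b) : ℝ)
      = (Nat.factorial s : ℝ) := by
    exact_mod_cast congrArg (Nat.cast : ℕ → ℝ) f2
  have hpow : (2 : ℝ) ^ b * 2 ^ (s - b) = 2 ^ s := by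
    rw [← pow_add]; congr 1; omega
  have hb' : (Nat.factorial b : ℝ) ≠ 0 := Nat.cast_ne_zero.mpr (Nat.factorial_ne_zero b)
  have hsb' : (Nat.factorial (s - b) : ℝ) ≠ 0 := Nat.cast_ne_zero.mpr (Nat.factorial_ne_zero _)
  have hs' : (Nat.factorial s : ℝ) ≠ 0 := Nat.cast_ne_zero.mpr (Nat.factorial_ne_zero s)
  field_simp
  linear_combination (2:ℝ) ^ s * (Nat.factorial s : ℝ) * f1'
    - (Nat.factorial (2*s) : ℝ) * ((2:ℝ)^b * 2^(s-b)) * f2'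
    - (Nat.factorial (2*s) : ℝ) * (Nat.factorial s : ℝ) * hpow

lemma gm_binom (ρ γ : ℝ) (h : ρ ^ 2 + γ ^ 2 = 1) (n : ℕ) :
    ∑ k ∈ Finset.range (n + 1),
        (n.choose k : ℝ) * ρ ^ k * γ ^ (n - k) * (gm k * gm (n - k)) = gm n := by
  rcases Nat.even_or_odd n with ⟨s, hs⟩ | hodd
  · have hn : n = 2 * s := by omega
    subst hn
    have himg : Finset.filter (fun k => Even k) (Finset.range (2 * s + 1))
        = Finset.image (fun b => 2 * b) (Finset.range (s + 1)) := by
      ext a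
      simp only [Finset.mem_filter, Finset.mem_range, Finset.mem_image]
      constructor
      · rintro ⟨h1, r, rfl⟩
        exact ⟨r, by omega, by omega⟩
      · rintro ⟨b, hb, rfl⟩
        exact ⟨by omega, ⟨b, by omega⟩⟩
    rw [← Finset.sum_filter_add_sum_filter_not (Finset.range (2 * s + 1)) (fun k => Even k)]
    have hzero : ∑ k ∈ Finset.filter (fun k => ¬ Even k) (Finset.range (2 * s + 1)),
        ((2 * s).choose k : ℝ) * ρ ^ k * γ ^ (2 * s - k) * (gm k * gm (2 * s - k)) = 0 := by
      refine Finset.sum_eq_zero fun k hk => ?_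
      simp only [Finset.mem_filter] at hk
      rw [gm_odd' (Nat.not_even_iff_odd.mp hk.2)]
      ring
    rw [hzero, add_zero, himg, Finset.sum_image (fun a _ b _ hab => by omega)]
    have hterm : ∀ b ∈ Finset.range (s + 1),
        ((2 * s).choose (2 * b) : ℝ) * ρ ^ (2 * b) * γ ^ (2 * s - 2 * b)
          * (gm (2 * b) * gm (2 * s - 2 * b))
        = (Nat.factorial (2 * s) : ℝ) / (2 ^ s * (Nat.factorial s : ℝ))
            * ((ρ ^ 2) ^ b * (γ ^ 2) ^ (s - b) * (s.choose b : ℝ)) := by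
      intro b hb
      have hbs : b ≤ s := by simpa using Nat.lt_succ_iff.mp (Finset.mem_range.mp hb)
      have e1 : 2 * s - 2 * b = 2 * (s - b) := by omega
      rw [e1, gm_even, gm_even, ← pow_mul, ← pow_mul]
      have := coef_id s b hbs
      calc ((2 * s).choose (2 * b) : ℝ) * ρ ^ (2 * b) * γ ^ (2 * (s - b))
            * ((Nat.factorial (2 * b) : ℝ) / (2 ^ b * (Nat.factorial b : ℝ))
              * ((Nat.factorial (2 * (s - b)) : ℝ)
                / (2 ^ (s - b) * (Nat.factorial (s - b) : ℝ))))
          = (((2 * s).choose (2 * b) : ℝ)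
              * ((Nat.factorial (2 * b) : ℝ) / (2 ^ b * (Nat.factorial b : ℝ))
                * ((Nat.factorial (2 * (s - b)) : ℝ)
                  / (2 ^ (s - b) * (Nat.factorial (s - b) : ℝ)))))
              * (ρ ^ (2 * b) * γ ^ (2 * (s - b))) := by ring
        _ = (Nat.factorial (2 * s) : ℝ) / (2 ^ s * (Nat.factorial s : ℝ))
              * ((s.choose b : ℝ)) * (ρ ^ (2 * b) * γ ^ (2 * (s - b))) := by rw [this]
        _ = (Nat.factorial (2 * s) : ℝ) / (2 ^ s * (Nat.factorial s : ℝ))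
              * (ρ ^ (2 * b) * γ ^ (2 * (s - b)) * (s.choose b : ℝ)) := by ring
        _ = _ := by rw [pow_mul, pow_mul]
    rw [Finset.sum_congr rfl hterm, ← Finset.mul_sum]
    have hbinom := add_pow (ρ ^ 2) (γ ^ 2) s
    rw [h, one_pow] at hbinom
    rw [show ∑ b ∈ Finset.range (s + 1),
          (ρ ^ 2) ^ b * (γ ^ 2) ^ (s - b) * ((s.choose b : ℝ))
        = (1 : ℝ) from hbinom.symm]
    rw [gm_even, mul_one]
  · rw [gm_odd' hodd]
    refine Finset.sum_eq_zero fun k hk => ?_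
    have hkn : k ≤ n := by simpa using Nat.lt_succ_iff.mp (Finset.mem_range.mp hk)
    rcases Nat.even_or_odd k with he | ho
    · rw [gm_odd' (Nat.Odd.sub_even hkn hodd he)]
      ring
    · rw [gm_odd' ho]
      ring

noncomputable def Uop (c : ℝ) (p : ℝ[X]) : ℝ[X] :=
  ∑ k ∈ Finset.range (p.natDegree + 1), Polynomial.C (c ^ k * gm k) * Polynomial.hasseDeriv k p

lemma Uop_ext (c : ℝ) (p : ℝ[X]) {M : ℕ} (hM : p.natDegree < M) :
    Uop c p = ∑ k ∈ Finset.range M, Polynomial.C (c ^ k * gm k) * Polynomial.hasseDeriv k p := by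
  refine Finset.sum_subset (Finset.range_subset_range.mpr hM) fun k _ hk => ?_
  rw [Polynomial.hasseDeriv_eq_zero_of_lt_natDegree p k (by
    simpa using Nat.lt_of_succ_le (Nat.not_lt.mp (fun hc => hk (Finset.mem_range.mpr hc))))]
  · simp

lemma eval_Uop (c a : ℝ) (p : ℝ[X]) :
    ∫ y, p.eval (a + c * y) ∂(gaussianReal 0 1) = (Uop c p).eval a := by
  have h1 : ∀ y : ℝ, p.eval (a + c * y)
      = ∑ k ∈ Finset.range (p.natDegree + 1),
          ((Polynomial.hasseDeriv k p).eval a * c ^ k) * y ^ k := by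
    intro y
    rw [show a + c * y = c * y + a from by ring, ← Polynomial.taylor_eval,
      Polynomial.eval_eq_sum_range (x := c * y), Polynomial.natDegree_taylor]
    refine Finset.sum_congr rfl fun k _ => ?_
    rw [Polynomial.taylor_coeff, mul_pow]
    ring
  simp_rw [h1]
  rw [integral_finset_sum _ fun k _ => ((integrable_pow_nu k).const_mul _)]
  rw [Uop, Polynomial.eval_finset_sum]
  refine Finset.sum_congr rfl fun k _ => ?_
  rw [MeasureTheory.integral_const_mul]
  simp only [Polynomial.eval_mul, Polynomial.eval_C]
  show _ * gm k = _
  ring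

lemma integrable_eval_shift (c a : ℝ) (p : ℝ[X]) :
    Integrable (fun y => p.eval (a + c * y)) (gaussianReal 0 1) := by
  have : ∀ y : ℝ, p.eval (a + c * y)
      = (p.comp (Polynomial.C a + Polynomial.C c * Polynomial.X)).eval y := by
    intro y; simp [Polynomial.eval_comp]
  simp_rw [this]
  exact integrable_polyeval _

lemma Uop_derivative (c : ℝ) (p : ℝ[X]) :
    (Uop c p).derivative = Uop c p.derivative := by
  have hcomm : ∀ (k : ℕ) (q : ℝ[X]),
      (Polynomial.hasseDeriv k q).derivative = Polynomial.hasseDeriv k q.derivative := by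
    intro k q
    rw [← Polynomial.hasseDeriv_one', ← Polynomial.hasseDeriv_one']
    have h1 := LinearMap.congr_fun (Polynomial.hasseDeriv_comp (R := ℝ) 1 k) q
    have h2 := LinearMap.congr_fun (Polynomial.hasseDeriv_comp (R := ℝ) k 1) q
    simp only [LinearMap.comp_apply] at h1 h2
    rw [h1, h2, Nat.choose_one_right, Nat.choose_succ_self_right, Nat.add_comm 1 k]
  rw [Uop, Polynomial.derivative_sum,
    Uop_ext c p.derivative (Nat.lt_succ_of_le (le_trans (Polynomial.natDegree_derivative_le p) (Nat.sub_le _ 1)))]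
  refine Finset.sum_congr rfl fun k _ => ?_
  rw [Polynomial.derivative_C_mul, hcomm]

lemma integrable_eval_shift' (a : ℝ) (p : ℝ[X]) :
    Integrable (fun y => p.eval (a + y)) (gaussianReal 0 1) := by
  have := integrable_eval_shift 1 a p
  simpa only [one_mul] using this

lemma integrable_mul_eval (q : ℝ[X]) :
    Integrable (fun x => x * q.eval x) (gaussianReal 0 1) := by
  have : ∀ x : ℝ, x * q.eval x = (Polynomial.X * q).eval x := by
    intro x; simp
  simp_rw [this]
  exact integrable_polyeval _

lemma stein (q : ℝ[X]) :
    ∫ x, x * q.eval x ∂(gaussianReal 0 1)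
      = ∫ x, q.derivative.eval x ∂(gaussianReal 0 1) := by
  induction q using Polynomial.induction_on' with
  | add p q hp hq =>
    simp only [Polynomial.eval_add, Polynomial.derivative_add, mul_add]
    rw [integral_add (integrable_mul_eval p) (integrable_mul_eval q),
      integral_add (integrable_polyeval _) (integrable_polyeval _), hp, hq]
  | monomial d c =>
    simp only [Polynomial.eval_monomial, Polynomial.derivative_monomial]
    have h1 : ∀ x : ℝ, x * (c * x ^ d) = c * x ^ (d + 1) := fun x => by ring
    simp_rw [h1]
    rw [MeasureTheory.integral_const_mul, MeasureTheory.integral_const_mul]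
    have h2 : (∫ x, x ^ (d + 1) ∂(gaussianReal 0 1)) = gm (d + 1) := rfl
    have h3 : (∫ x, x ^ (d - 1) ∂(gaussianReal 0 1)) = gm (d - 1) := rfl
    rw [h2, h3, gm_rec]
    push_cast
    ring

lemma key_moment (ρ γ : ℝ) (h : ρ ^ 2 + γ ^ 2 = 1) (j : ℕ) :
    ∫ x, (∫ y, (ρ * x + γ * y) ^ j ∂(gaussianReal 0 1)) ∂(gaussianReal 0 1) = gm j := by
  have hinner : ∀ x : ℝ, ∫ y, (ρ * x + γ * y) ^ j ∂(gaussianReal 0 1)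
      = ∑ k ∈ Finset.range (j + 1),
          ((j.choose k : ℝ) * ρ ^ k * γ ^ (j - k) * gm (j - k)) * x ^ k := by
    intro x
    have hexp : ∀ y : ℝ, (ρ * x + γ * y) ^ j
        = ∑ k ∈ Finset.range (j + 1),
            ((j.choose k : ℝ) * ρ ^ k * γ ^ (j - k) * x ^ k) * y ^ (j - k) := by
      intro y
      rw [add_pow]
      refine Finset.sum_congr rfl fun k _ => ?_
      rw [mul_pow, mul_pow]
      ring
    simp_rw [hexp]
    rw [integral_finset_sum _ fun k _ => ((integrable_pow_nu (j - k)).const_mul _)]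
    refine Finset.sum_congr rfl fun k _ => ?_
    rw [MeasureTheory.integral_const_mul]
    show _ * gm (j - k) = _
    ring
  simp_rw [hinner]
  rw [integral_finset_sum _ fun k _ => ((integrable_pow_nu k).const_mul _)]
  rw [← gm_binom ρ γ h j]
  refine Finset.sum_congr rfl fun k _ => ?_
  rw [MeasureTheory.integral_const_mul]
  show _ * gm k = _
  ring

lemma double_int (ρ γ : ℝ) (h : ρ ^ 2 + γ ^ 2 = 1) (p : ℝ[X]) (a : ℝ) :
    ∫ x, (Uop γ p).eval (a + ρ * x) ∂(gaussianReal 0 1)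
      = ∫ z, p.eval (a + z) ∂(gaussianReal 0 1) := by
  induction p using Polynomial.induction_on' with
  | add p q hp hq =>
    have h1 : ∀ x : ℝ, (Uop γ (p + q)).eval (a + ρ * x)
        = (Uop γ p).eval (a + ρ * x) + (Uop γ q).eval (a + ρ * x) := by
      intro x
      rw [← eval_Uop, ← eval_Uop, ← eval_Uop]
      simp only [Polynomial.eval_add]
      exact integral_add (integrable_eval_shift _ _ _) (integrable_eval_shift _ _ _)
    simp_rw [h1, Polynomial.eval_add]
    rw [integral_add (integrable_eval_shift ρ a _) (integrable_eval_shift ρ a _),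
      integral_add (integrable_eval_shift' a _) (integrable_eval_shift' a _), hp, hq]
  | monomial d c =>
    have h1 : ∀ x : ℝ, (Uop γ (Polynomial.monomial d c)).eval (a + ρ * x)
        = ∫ y, c * ((a + (ρ * x + γ * y)) ^ d) ∂(gaussianReal 0 1) := by
      intro x
      rw [← eval_Uop]
      congr 1
      ext y
      rw [Polynomial.eval_monomial]
      ring_nf
    simp_rw [h1, Polynomial.eval_monomial, MeasureTheory.integral_const_mul]
    congr 1
    -- expand (a + w)^d
    have hexp : ∀ w : ℝ, (a + w) ^ d
        = ∑ k ∈ Finset.range (d + 1), (a ^ k * (d.choose k : ℝ)) * w ^ (d - k) := by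
      intro w
      rw [add_pow]
      refine Finset.sum_congr rfl fun k _ => ?_
      ring
    simp_rw [hexp]
    have hintin : ∀ (k : ℕ) (x : ℝ), Integrable
        (fun y : ℝ => (ρ * x + γ * y) ^ (d - k)) (gaussianReal 0 1) := by
      intro k x
      have := integrable_eval_shift γ (ρ * x) ((Polynomial.X : ℝ[X]) ^ (d - k))
      simpa using this
    have hswap1 : ∀ x : ℝ, ∫ y, (∑ k ∈ Finset.range (d + 1),
          (a ^ k * (d.choose k : ℝ)) * (ρ * x + γ * y) ^ (d - k)) ∂(gaussianReal 0 1)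
        = ∑ k ∈ Finset.range (d + 1),
          (a ^ k * (d.choose k : ℝ)) * ∫ y, (ρ * x + γ * y) ^ (d - k) ∂(gaussianReal 0 1) := by
      intro x
      rw [integral_finset_sum _ fun k _ => ((hintin k x).const_mul _)]
      exact Finset.sum_congr rfl fun k _ => MeasureTheory.integral_const_mul _ _
    simp_rw [hswap1]
    have hintout : ∀ k : ℕ, Integrable
        (fun x : ℝ => ∫ y, (ρ * x + γ * y) ^ (d - k) ∂(gaussianReal 0 1))
        (gaussianReal 0 1) := by
      intro k
      have h2 : ∀ x : ℝ, ∫ y, (ρ * x + γ * y) ^ (d - k) ∂(gaussianReal 0 1)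
          = (Uop γ ((Polynomial.X : ℝ[X]) ^ (d - k))).eval (0 + ρ * x) := by
        intro x
        rw [← eval_Uop]
        congr 1
        ext y
        simp [zero_add]
      simp_rw [h2]
      exact integrable_eval_shift ρ 0 _
    rw [integral_finset_sum _ fun k _ => ((hintout k).const_mul _),
      integral_finset_sum _ fun k _ => ((integrable_pow_nu (d - k)).const_mul _)]
    refine Finset.sum_congr rfl fun k _ => ?_
    rw [MeasureTheory.integral_const_mul, MeasureTheory.integral_const_mul,
      key_moment ρ γ h (d - k)]
    rfl

lemma cm_shift (p : ℝ[X]) (t : ℝ) :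
    ∫ x, p.eval x * Real.exp (t * x) ∂(gaussianReal 0 1)
      = Real.exp (t ^ 2 / 2) * ∫ x, p.eval (x + t) ∂(gaussianReal 0 1) := by
  rw [integral_nu, integral_nu, ← MeasureTheory.integral_const_mul]
  rw [← MeasureTheory.integral_add_right_eq_self (μ := (volume : Measure ℝ))
    (fun x => gaussianPDFReal 0 1 x * (p.eval x * Real.exp (t * x))) t]
  congr 1
  ext x
  simp only [gpdf_eq]
  have hexp : Real.exp (-(x + t) ^ 2 / 2) * Real.exp (t * (x + t))
      = Real.exp (t ^ 2 / 2) * Real.exp (-x ^ 2 / 2) := by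
    rw [← Real.exp_add, ← Real.exp_add]
    congr 1
    ring
  calc (Real.sqrt (2 * π))⁻¹ * Real.exp (-(x + t) ^ 2 / 2)
        * (p.eval (x + t) * Real.exp (t * (x + t)))
      = (Real.sqrt (2 * π))⁻¹ * p.eval (x + t)
          * (Real.exp (-(x + t) ^ 2 / 2) * Real.exp (t * (x + t))) := by ring
    _ = (Real.sqrt (2 * π))⁻¹ * p.eval (x + t)
          * (Real.exp (t ^ 2 / 2) * Real.exp (-x ^ 2 / 2)) := by rw [hexp]
    _ = Real.exp (t ^ 2 / 2) * ((Real.sqrt (2 * π))⁻¹ * Real.exp (-x ^ 2 / 2) * p.eval (x + t)) := by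
        ring

noncomputable def Ppoly (μ ρ γ : ℝ) : ℕ → ℝ[X]
  | 0 => 1
  | N + 1 => (Polynomial.C μ + Polynomial.X)
      * ((Uop γ (Ppoly μ ρ γ N)).comp (Polynomial.C ρ * Polynomial.X))

/-- The generating functions
`T_N(t) = e^{-t²/2} ∫ Q_N(x) e^{tx} dN(0,1)(x)` of the Hermite–Fourier coefficients
of the conditional product moments `Q_N` are differentiable and satisfy the
pantograph-type recurrence `T_{N+1}(t) = (μ+t) T_N(ρt) + ρ T_N'(ρt)`. -/
theorem generating_function_recurrence
    (μ ρ : ℝ) (hρ0 : 0 < ρ) (hρ1 : ρ < 1)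
    (γ : ℝ) (hγ : γ = Real.sqrt (1 - ρ ^ 2))
    (Q : ℕ → ℝ → ℝ) (hQ0 : ∀ x, Q 0 x = 1)
    (hQ : ∀ N x, Q (N + 1) x
      = (μ + x) * ∫ y, Q N (ρ * x + γ * y) ∂(gaussianReal 0 1))
    (T : ℕ → ℝ → ℝ)
    (hT : ∀ N t, T N t
      = Real.exp (-t ^ 2 / 2) * ∫ x, Q N x * Real.exp (t * x) ∂(gaussianReal 0 1)) :
    (∀ N, Differentiable ℝ (T N)) ∧
    ∀ N t, T (N + 1) t = (μ + t) * T N (ρ * t) + ρ * deriv (T N) (ρ * t) := by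
  have hγ2 : ρ ^ 2 + γ ^ 2 = 1 := by
    have h1 : ρ ^ 2 < 1 := by
      have := pow_lt_one₀ hρ0.le hρ1 (two_ne_zero)
      simpa using this
    rw [hγ, Real.sq_sqrt (by linarith)]
    ring
  have hrep : ∀ N x, Q N x = (Ppoly μ ρ γ N).eval x := by
    intro N
    induction N with
    | zero => intro x; simp [hQ0, Ppoly]
    | succ N ih =>
      intro x
      rw [hQ]
      have h1 : ∫ y, Q N (ρ * x + γ * y) ∂(gaussianReal 0 1)
          = ∫ y, (Ppoly μ ρ γ N).eval (ρ * x + γ * y) ∂(gaussianReal 0 1) := by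
        simp_rw [ih]
      rw [h1, eval_Uop γ (ρ * x)]
      simp [Ppoly, Polynomial.eval_mul, Polynomial.eval_comp]
  have hT' : ∀ N t, T N t = ∫ x, (Ppoly μ ρ γ N).eval (x + t) ∂(gaussianReal 0 1) := by
    intro N t
    rw [hT]
    simp only [hrep]
    rw [cm_shift, ← mul_assoc, ← Real.exp_add,
      show -t ^ 2 / 2 + t ^ 2 / 2 = 0 from by ring, Real.exp_zero, one_mul]
  have hTU : ∀ N t, T N t = (Uop 1 (Ppoly μ ρ γ N)).eval t := by
    intro N t
    rw [hT' N t, ← eval_Uop 1 t]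
    simp_rw [show ∀ x : ℝ, x + t = t + 1 * x from fun x => by ring]
  have hdiff : ∀ N, Differentiable ℝ (T N) := by
    intro N
    have hd : Differentiable ℝ fun t : ℝ => (Uop 1 (Ppoly μ ρ γ N)).eval t :=
      Polynomial.differentiable (𝕜 := ℝ) (Uop 1 (Ppoly μ ρ γ N))
    rw [funext (hTU N)]
    exact hd
  have hderiv : ∀ N s, deriv (T N) s = (Uop 1 (Ppoly μ ρ γ N)).derivative.eval s := by
    intro N s
    rw [funext (hTU N)]
    exact Polynomial.deriv (𝕜 := ℝ) (p := Uop 1 (Ppoly μ ρ γ N))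
  refine ⟨hdiff, fun N t => ?_⟩
  set q := Ppoly μ ρ γ N with hq'
  have hev : ∀ x : ℝ, (Ppoly μ ρ γ (N + 1)).eval (x + t)
      = (μ + t) * (Uop γ q).eval (ρ * t + ρ * x) + x * (Uop γ q).eval (ρ * t + ρ * x) := by
    intro x
    show ((Polynomial.C μ + Polynomial.X)
        * ((Uop γ q).comp (Polynomial.C ρ * Polynomial.X))).eval (x + t) = _
    rw [Polynomial.eval_mul, Polynomial.eval_comp]
    simp only [Polynomial.eval_add, Polynomial.eval_mul, Polynomial.eval_C, Polynomial.eval_X]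
    rw [show ρ * (x + t) = ρ * t + ρ * x from by ring]
    ring
  rw [hT' (N + 1) t]
  simp_rw [hev]
  have hint1 : Integrable (fun x => (Uop γ q).eval (ρ * t + ρ * x)) (gaussianReal 0 1) :=
    integrable_eval_shift ρ (ρ * t) _
  have hint2 : Integrable (fun x => x * (Uop γ q).eval (ρ * t + ρ * x)) (gaussianReal 0 1) := by
    have h2 : ∀ x : ℝ, x * (Uop γ q).eval (ρ * t + ρ * x)
        = x * ((Uop γ q).comp (Polynomial.C (ρ * t) + Polynomial.C ρ * Polynomial.X)).eval x := by
      intro x; simp [Polynomial.eval_comp]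
    simp_rw [h2]
    exact integrable_mul_eval _
  rw [integral_add (hint1.const_mul _) hint2, MeasureTheory.integral_const_mul]
  have hW1 : ∫ x, (Uop γ q).eval (ρ * t + ρ * x) ∂(gaussianReal 0 1)
      = (Uop 1 q).eval (ρ * t) := by
    rw [double_int ρ γ hγ2 q (ρ * t), ← eval_Uop 1 (ρ * t) q]
    simp_rw [one_mul]
  have hW2 : ∫ x, x * (Uop γ q).eval (ρ * t + ρ * x) ∂(gaussianReal 0 1)
      = ρ * (Uop 1 q).derivative.eval (ρ * t) := by
    set r := (Uop γ q).comp (Polynomial.C (ρ * t) + Polynomial.C ρ * Polynomial.X) with hr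
    have hre : ∀ x : ℝ, (Uop γ q).eval (ρ * t + ρ * x) = r.eval x := by
      intro x; simp [hr, Polynomial.eval_comp]
    simp_rw [hre]
    rw [stein r]
    have hrd : r.derivative = Polynomial.C ρ
        * ((Uop γ q.derivative).comp (Polynomial.C (ρ * t) + Polynomial.C ρ * Polynomial.X)) := by
      rw [hr, Polynomial.derivative_comp]
      simp [Uop_derivative]
    rw [hrd]
    have h3 : ∀ x : ℝ, (Polynomial.C ρ * ((Uop γ q.derivative).comp
        (Polynomial.C (ρ * t) + Polynomial.C ρ * Polynomial.X))).eval x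
        = ρ * (Uop γ q.derivative).eval (ρ * t + ρ * x) := by
      intro x; simp [Polynomial.eval_comp]
    simp_rw [h3]
    rw [MeasureTheory.integral_const_mul, double_int ρ γ hγ2 q.derivative (ρ * t)]
    rw [show (∫ z, q.derivative.eval (ρ * t + z) ∂(gaussianReal 0 1))
        = (Uop 1 q.derivative).eval (ρ * t) from by
      rw [← eval_Uop 1 (ρ * t)]; simp_rw [one_mul]]
    rw [Uop_derivative]
  rw [hW1, hW2, hTU N (ρ * t), hderiv N (ρ * t)]
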